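/- Every independent set S of the interference graph G_{K,T} satisfies |S| ≤ K·(T + c)/2, where c = max_{i≠j} |l'_{ij}|. -/

import Mathlib

/-- The time-indexed interference graph `G_{K,T}` of the `K`-user LOS interference
channel with normalized cross-delays `l i j` (representing `l'_{ij}` for `i ≠ j`). -/
def interferenceGraph (K T : ℕ) (l : Fin K → Fin K → ℤ) :
    SimpleGraph (Fin K × Fin T) where
  Adj a b := a.1 ≠ b.1 ∧
    (((b.2 : ℕ) : ℤ) = ((a.2 : ℕ) : ℤ) + l b.1 a.1 ∨
     ((a.2 : ℕ) : ℤ) = ((b.2 : ℕ) : ℤ) + l a.1 b.1)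
  symm := by
    constructor
    rintro a b ⟨h1, h2⟩
    exact ⟨h1.symm, h2.symm⟩
  loopless := by
    constructor
    rintro a ⟨h, -⟩
    exact h rfl

/-- Every independent set `S` of the interference graph `G_{K,T}` satisfies
`|S| ≤ K·(T + c)/2`, where `c = max_{i≠j} |l'_{ij}|`. -/
theorem indep_set_card_bound (K T : ℕ) (hK : 2 ≤ K) (hT : 1 ≤ T)
    (l : Fin K → Fin K → ℤ)
    (S : Finset (Fin K × Fin T))
    (hS : ∀ u ∈ S, ∀ v ∈ S, ¬ (interferenceGraph K T l).Adj u v) :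
    (S.card : ℝ) ≤ K * (T +
      (Finset.univ.sup
        (fun p : {p : Fin K × Fin K // p.1 ≠ p.2} => (l p.1.1 p.1.2).natAbs) : ℕ)) / 2 := by
  classical
  set c : ℕ := Finset.univ.sup
      (fun p : {p : Fin K × Fin K // p.1 ≠ p.2} => (l p.1.1 p.1.2).natAbs) with hc
  set f : Fin K → ℕ := fun i => (S.filter (fun p => p.1 = i)).card with hf
  have hsum : S.card = ∑ i, f i :=
    Finset.card_eq_sum_card_fiberwise (fun p _ => Finset.mem_univ p.1)
  have hcle : ∀ i j : Fin K, i ≠ j → (l i j).natAbs ≤ c := fun i j hij =>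
    Finset.le_sup (f := fun p : {p : Fin K × Fin K // p.1 ≠ p.2} => (l p.1.1 p.1.2).natAbs)
      (Finset.mem_univ (⟨(i, j), hij⟩ : {p : Fin K × Fin K // p.1 ≠ p.2}))
  -- key pairwise bound
  have key : ∀ i j : Fin K, i ≠ j → f i + f j ≤ T + c := by
    intro i j hij
    set A : Finset ℤ := (S.filter (fun p => p.1 = i)).image (fun p => ((p.2 : ℕ) : ℤ)) with hA
    set B : Finset ℤ :=
      (S.filter (fun p => p.1 = j)).image (fun p => ((p.2 : ℕ) : ℤ) + l i j) with hB
    have hAcard : A.card = f i := by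
      apply Finset.card_image_of_injOn
      intro p hp q hq hpq
      simp only [Finset.mem_coe, Finset.mem_filter] at hp hq
      have hpq' : ((p.2 : ℕ) : ℤ) = ((q.2 : ℕ) : ℤ) := hpq
      have h2 : (p.2 : ℕ) = (q.2 : ℕ) := by exact_mod_cast hpq'
      exact Prod.ext (hp.2.trans hq.2.symm) (Fin.ext h2)
    have hBcard : B.card = f j := by
      apply Finset.card_image_of_injOn
      intro p hp q hq hpq
      simp only [Finset.mem_coe, Finset.mem_filter] at hp hq
      have h2 : (p.2 : ℕ) = (q.2 : ℕ) := by
        have hpq' : ((p.2 : ℕ) : ℤ) + l i j = ((q.2 : ℕ) : ℤ) + l i j := hpq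
        have : ((p.2 : ℕ) : ℤ) = ((q.2 : ℕ) : ℤ) := by linarith
        exact_mod_cast this
      exact Prod.ext (hp.2.trans hq.2.symm) (Fin.ext h2)
    have hdisj : Disjoint A B := by
      rw [Finset.disjoint_left]
      intro t htA htB
      simp only [hA, hB, Finset.mem_image, Finset.mem_filter] at htA htB
      obtain ⟨p, ⟨hpS, hpi⟩, hpt⟩ := htA
      obtain ⟨q, ⟨hqS, hqj⟩, hqt⟩ := htB
      apply hS q hqS p hpS
      refine ⟨?_, Or.inl ?_⟩
      · rw [hpi, hqj]; exact hij.symm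
      · rw [hpi, hqj, hpt, ← hqt]
    set I : Finset ℤ := Finset.Icc (min 0 (l i j)) ((T : ℤ) - 1 + max 0 (l i j)) with hI
    have hAI : A ⊆ I := by
      intro t ht
      simp only [hA, Finset.mem_image, Finset.mem_filter] at ht
      obtain ⟨p, ⟨hpS, hpi⟩, hpt⟩ := ht
      have hlt : ((p.2 : ℕ) : ℤ) < T := by exact_mod_cast p.2.isLt
      have h0 : (0 : ℤ) ≤ ((p.2 : ℕ) : ℤ) := Int.ofNat_nonneg _
      simp only [hI, Finset.mem_Icc]
      omega
    have hBI : B ⊆ I := by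
      intro t ht
      simp only [hB, Finset.mem_image, Finset.mem_filter] at ht
      obtain ⟨p, ⟨hpS, hpj⟩, hpt⟩ := ht
      have hlt : ((p.2 : ℕ) : ℤ) < T := by exact_mod_cast p.2.isLt
      have h0 : (0 : ℤ) ≤ ((p.2 : ℕ) : ℤ) := Int.ofNat_nonneg _
      simp only [hI, Finset.mem_Icc]
      omega
    have hunion : (A ∪ B).card ≤ I.card :=
      Finset.card_le_card (Finset.union_subset hAI hBI)
    rw [Finset.card_union_of_disjoint hdisj, hAcard, hBcard] at hunion
    have hIcard : I.card = ((T : ℤ) - 1 + max 0 (l i j) + 1 - min 0 (l i j)).toNat := by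
      simp [hI, Int.card_Icc]
    rw [hIcard] at hunion
    have hlc : (l i j).natAbs ≤ c := hcle i j hij
    omega
  -- summation
  set S1 : ℕ := ∑ i, f i with hS1
  have h1 : ∀ i : Fin K,
      (K - 1) * f i + ∑ j ∈ Finset.univ.erase i, f j ≤ (K - 1) * (T + c) := by
    intro i
    have := Finset.sum_le_sum (s := Finset.univ.erase i)
      (f := fun j => f i + f j) (g := fun _ => T + c)
      (fun j hj => key i j (Finset.ne_of_mem_erase hj).symm)
    rw [Finset.sum_add_distrib, Finset.sum_const, Finset.sum_const,
      Finset.card_erase_of_mem (Finset.mem_univ i), Finset.card_univ,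
      Fintype.card_fin, smul_eq_mul, smul_eq_mul] at this
    calc (K - 1) * f i + ∑ j ∈ Finset.univ.erase i, f j
        = (K - 1) * f i + ∑ j ∈ Finset.univ.erase i, f j := rfl
      _ ≤ (K - 1) * (T + c) := this
  have h2 : ∀ i : Fin K, f i + ∑ j ∈ Finset.univ.erase i, f j = S1 := fun i =>
    Finset.add_sum_erase _ f (Finset.mem_univ i)
  have hX : ∑ i : Fin K, (f i + ∑ j ∈ Finset.univ.erase i, f j) = K * S1 := by
    rw [Finset.sum_congr rfl (fun i _ => h2 i), Finset.sum_const, Finset.card_univ,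
      Fintype.card_fin, smul_eq_mul]
  have hXsplit : S1 + ∑ i : Fin K, ∑ j ∈ Finset.univ.erase i, f j = K * S1 := by
    rw [← hX, Finset.sum_add_distrib]
  have hsum1 : ∑ i : Fin K, ((K - 1) * f i + ∑ j ∈ Finset.univ.erase i, f j)
      ≤ ∑ _i : Fin K, (K - 1) * (T + c) :=
    Finset.sum_le_sum (fun i _ => h1 i)
  rw [Finset.sum_add_distrib, ← Finset.mul_sum, Finset.sum_const, Finset.card_univ,
    Fintype.card_fin, smul_eq_mul] at hsum1
  rw [← hS1] at hsum1
  have hX2 : ∑ i : Fin K, ∑ j ∈ Finset.univ.erase i, f j = (K - 1) * S1 := by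
    have hks : K * S1 = (K - 1) * S1 + S1 := by
      conv_lhs => rw [show K = (K - 1) + 1 from by omega]
      ring
    omega
  have hmain : (K - 1) * (2 * S1) ≤ (K - 1) * (K * (T + c)) := by
    calc (K - 1) * (2 * S1) = (K - 1) * S1 + (K - 1) * S1 := by ring
      _ = (K - 1) * S1 + ∑ i : Fin K, ∑ j ∈ Finset.univ.erase i, f j := by rw [hX2]
      _ ≤ K * ((K - 1) * (T + c)) := hsum1
      _ = (K - 1) * (K * (T + c)) := by ring
  have hKpos : 0 < K - 1 := by omega
  have h2S1 : 2 * S1 ≤ K * (T + c) := Nat.le_of_mul_le_mul_left hmain hKpos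
  have hScard : S.card = S1 := hsum
  rw [hScard]
  have : (2 * S1 : ℝ) ≤ (K * (T + c) : ℕ) := by exact_mod_cast h2S1
  push_cast at this ⊢
  linarith
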